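/- Fix an integer k ≥ 2, a dimension d ≥ 1, a privacy budget ε > 0, and weights θ_1,…,θ_d > 0 with Σ_{i=1}^d θ_i = 1. Suppose for each i the noise scale σ_i satisfies σ_i ≥ (k−1)/(k ε θ_i). Then the product mechanism that randomizes each coordinate independently satisfies ε-local differential privacy: for all vectors t, t', u ∈ {1,…,k}^d, Π_{i=1}^d P_{σ_i}(t_i, u_i) ≤ e^ε · Π_{i=1}^d P_{σ_i}(t'_i, u_i). -/

import Mathlib

/-- Unnormalized weight of the discrete exponential randomized-response
mechanism on `{1,…,k}`: `Q_σ(t,u) = exp(−|u−t|/(kσ))`. -/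
noncomputable def rrWeight (k : ℕ) (σ : ℝ) (t u : ℕ) : ℝ :=
  Real.exp (-|(u : ℝ) - (t : ℝ)| / (k * σ))

/-- Normalizer `C_σ(t) = Σ_{v=1}^k exp(−|v−t|/(kσ))`. -/
noncomputable def rrNorm (k : ℕ) (σ : ℝ) (t : ℕ) : ℝ :=
  ∑ v ∈ Finset.Icc 1 k, rrWeight k σ t v

/-- Randomization probability `P_σ(t,u) = Q_σ(t,u) / C_σ(t)`. -/
noncomputable def rrProb (k : ℕ) (σ : ℝ) (t u : ℕ) : ℝ :=
  rrWeight k σ t u / rrNorm k σ t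


lemma rrWeight_pos (k : ℕ) (σ : ℝ) (t u : ℕ) : 0 < rrWeight k σ t u :=
  Real.exp_pos _

lemma rrNorm_pos (k : ℕ) (hk : 1 ≤ k) (σ : ℝ) (t : ℕ) : 0 < rrNorm k σ t :=
  Finset.sum_pos (fun v _ => rrWeight_pos k σ t v)
    (by simp [Finset.nonempty_Icc]; omega)

lemma rrWeight_lipschitz (k : ℕ) (σ : ℝ) (hσ : 0 < σ) (hk : 1 ≤ k)
    (t t' u : ℕ) :
    rrWeight k σ t u ≤ Real.exp (|(t : ℝ) - t'| / (k * σ)) * rrWeight k σ t' u := by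
  have hc : (0:ℝ) < k * σ := by positivity
  rw [rrWeight, rrWeight, ← Real.exp_add]
  apply Real.exp_le_exp.mpr
  rw [← add_div, div_le_div_iff₀ hc hc]
  have h1 : |(u : ℝ) - t'| ≤ |(u:ℝ) - t| + |(t:ℝ) - t'| := abs_sub_le _ _ _
  nlinarith [abs_nonneg ((t:ℝ) - t')]

lemma rrNorm_symm (k : ℕ) (σ : ℝ) (t : ℕ) (ht : t ∈ Finset.Icc 1 k) :
    rrNorm k σ t = rrNorm k σ (k + 1 - t) := by
  simp only [Finset.mem_Icc] at ht
  unfold rrNorm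
  apply Finset.sum_nbij' (fun v => k + 1 - v) (fun v => k + 1 - v)
  · intro v hv; simp only [Finset.mem_Icc] at *; omega
  · intro v hv; simp only [Finset.mem_Icc] at *; omega
  · intro v hv; simp only [Finset.mem_Icc] at hv; omega
  · intro v hv; simp only [Finset.mem_Icc] at hv; omega
  · intro v hv
    simp only [Finset.mem_Icc] at hv
    unfold rrWeight
    congr 1
    have h1 : ((k + 1 - v : ℕ) : ℝ) = (k:ℝ) + 1 - v := by
      push_cast [Nat.cast_sub (by omega : v ≤ k + 1)]; ring
    have h2 : ((k + 1 - t : ℕ) : ℝ) = (k:ℝ) + 1 - t := by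
      push_cast [Nat.cast_sub (by omega : t ≤ k + 1)]; ring
    rw [h1, h2]
    congr 1
    rw [abs_sub_comm]
    congr 1
    ring

lemma rr_single (k : ℕ) (hk : 2 ≤ k) (σ : ℝ) (hσ : 0 < σ)
    (t t' u : ℕ) (ht : t ∈ Finset.Icc 1 k) (ht' : t' ∈ Finset.Icc 1 k) :
    rrProb k σ t u ≤ Real.exp (((k:ℝ) - 1) / (k * σ)) * rrProb k σ t' u := by
  have hk1 : 1 ≤ k := by omega
  have hc : (0:ℝ) < k * σ := by positivity
  have hNt : 0 < rrNorm k σ t := rrNorm_pos k hk1 σ t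
  have hNt' : 0 < rrNorm k σ t' := rrNorm_pos k hk1 σ t'
  simp only [Finset.mem_Icc] at ht ht'
  -- bounds as reals
  have htr1 : (1:ℝ) ≤ t := by exact_mod_cast ht.1
  have htr2 : (t:ℝ) ≤ k := by exact_mod_cast ht.2
  have ht'r1 : (1:ℝ) ≤ t' := by exact_mod_cast ht'.1
  have ht'r2 : (t':ℝ) ≤ k := by exact_mod_cast ht'.2
  -- weight bound
  have hW : rrWeight k σ t u ≤ Real.exp (|(t:ℝ) - t'| / (k * σ)) * rrWeight k σ t' u :=
    rrWeight_lipschitz k σ hσ hk1 t t' u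
  -- norm bound: rrNorm t' ≤ exp((k-1-|t-t'|)/(kσ)) * rrNorm t
  have hNsymm : rrNorm k σ t' = rrNorm k σ (k + 1 - t') :=
    rrNorm_symm k σ t' (by simp [Finset.mem_Icc]; omega)
  -- Lipschitz from reflected point to t, applied termwise over sum
  have hNlip : rrNorm k σ (k + 1 - t') ≤
      Real.exp (|((k + 1 - t' : ℕ):ℝ) - t| / (k * σ)) * rrNorm k σ t := by
    unfold rrNorm
    rw [Finset.mul_sum]
    apply Finset.sum_le_sum
    intro v _
    exact rrWeight_lipschitz k σ hσ hk1 (k + 1 - t') t v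
  have hcast : ((k + 1 - t' : ℕ) : ℝ) = (k:ℝ) + 1 - t' := by
    push_cast [Nat.cast_sub (by omega : t' ≤ k + 1)]; ring
  have habs : |((k:ℝ) + 1 - t') - t| ≤ ((k:ℝ) - 1) - |(t:ℝ) - t'| := by
    rcases abs_cases ((t:ℝ) - t') with ⟨h1, _⟩ | ⟨h1, _⟩ <;>
    rcases abs_cases (((k:ℝ) + 1 - t') - t) with ⟨h2, _⟩ | ⟨h2, _⟩ <;>
    rw [h1, h2] <;> linarith
  have hN : rrNorm k σ t' ≤ Real.exp ((((k:ℝ) - 1) - |(t:ℝ) - t'|) / (k * σ)) * rrNorm k σ t := by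
    rw [hNsymm]
    refine le_trans hNlip ?_
    apply mul_le_mul_of_nonneg_right _ hNt.le
    apply Real.exp_le_exp.mpr
    rw [hcast]
    gcongr

  -- combine
  have key : rrWeight k σ t u * rrNorm k σ t' ≤
      Real.exp (((k:ℝ) - 1) / (k * σ)) * (rrWeight k σ t' u * rrNorm k σ t) := by
    calc rrWeight k σ t u * rrNorm k σ t'
        ≤ (Real.exp (|(t:ℝ) - t'| / (k * σ)) * rrWeight k σ t' u) *
          (Real.exp ((((k:ℝ) - 1) - |(t:ℝ) - t'|) / (k * σ)) * rrNorm k σ t) := by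
          exact mul_le_mul hW hN hNt'.le
            (mul_nonneg (Real.exp_pos _).le (rrWeight_pos _ _ _ _).le)
      _ = Real.exp (((k:ℝ) - 1) / (k * σ)) * (rrWeight k σ t' u * rrNorm k σ t) := by
          rw [show Real.exp (|(t:ℝ) - t'| / (k * σ)) * rrWeight k σ t' u *
              (Real.exp ((((k:ℝ) - 1) - |(t:ℝ) - t'|) / (k * σ)) * rrNorm k σ t) =
              (Real.exp (|(t:ℝ) - t'| / (k * σ)) *
               Real.exp ((((k:ℝ) - 1) - |(t:ℝ) - t'|) / (k * σ))) *
              (rrWeight k σ t' u * rrNorm k σ t) by ring, ← Real.exp_add]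
          congr 2
          field_simp
          ring
  rw [rrProb, rrProb, ← mul_div_assoc, div_le_div_iff₀ hNt hNt']
  exact key.trans_eq (by ring)

/-- the product mechanism with per-coordinate noise scales
`σ_i ≥ (k−1)/(kεθ_i)`, where `θ_i > 0` and `Σ_i θ_i = 1`, satisfies `ε`-LDP:
`Π_i P_{σ_i}(t_i,u_i) ≤ e^ε · Π_i P_{σ_i}(t'_i,u_i)`. -/
theorem rr_product_ldp (k : ℕ) (hk : 2 ≤ k) (d : ℕ) (hd : 1 ≤ d)
    (ε : ℝ) (hε : 0 < ε)
    (θ : Fin d → ℝ) (hθpos : ∀ i, 0 < θ i) (hθsum : ∑ i, θ i = 1)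
    (σ : Fin d → ℝ) (hσpos : ∀ i, 0 < σ i)
    (hσ : ∀ i, σ i ≥ ((k : ℝ) - 1) / (k * ε * θ i))
    (t t' u : Fin d → ℕ)
    (ht : ∀ i, t i ∈ Finset.Icc 1 k) (ht' : ∀ i, t' i ∈ Finset.Icc 1 k)
    (hu : ∀ i, u i ∈ Finset.Icc 1 k) :
    ∏ i, rrProb k (σ i) (t i) (u i) ≤
      Real.exp ε * ∏ i, rrProb k (σ i) (t' i) (u i) := by
  have hkr : (1:ℝ) < k := by exact_mod_cast hk
  have step : ∀ i, rrProb k (σ i) (t i) (u i) ≤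
      Real.exp (ε * θ i) * rrProb k (σ i) (t' i) (u i) := by
    intro i
    refine le_trans (rr_single k hk (σ i) (hσpos i) (t i) (t' i) (u i) (ht i) (ht' i)) ?_
    apply mul_le_mul_of_nonneg_right _ (by
      have := rrWeight_pos k (σ i) (t' i) (u i)
      have := rrNorm_pos k (by omega) (σ i) (t' i)
      exact (div_pos ‹0 < rrWeight k (σ i) (t' i) (u i)› ‹_›).le)
    apply Real.exp_le_exp.mpr
    have hθi := hθpos i
    have hσi := hσpos i
    have h1 : (0:ℝ) < k * ε * θ i := by positivity
    have h2 : ((k:ℝ) - 1) ≤ σ i * (k * ε * θ i) := by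
      have := (div_le_iff₀ h1).mp (hσ i)
      linarith
    rw [div_le_iff₀ (by positivity : (0:ℝ) < k * σ i)]
    nlinarith
  calc ∏ i, rrProb k (σ i) (t i) (u i)
      ≤ ∏ i, (Real.exp (ε * θ i) * rrProb k (σ i) (t' i) (u i)) := by
        apply Finset.prod_le_prod
        · intro i _
          have := rrWeight_pos k (σ i) (t i) (u i)
          have := rrNorm_pos k (by omega) (σ i) (t i)
          exact (div_pos ‹0 < rrWeight k (σ i) (t i) (u i)› ‹_›).le
        · intro i _; exact step i
    _ = Real.exp ε * ∏ i, rrProb k (σ i) (t' i) (u i) := by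
        rw [Finset.prod_mul_distrib, ← Real.exp_sum, ← Finset.mul_sum, hθsum, mul_one]
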